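/- Let v ∈ ℝⁿ be totally irrational, γ : ℝ → ℝⁿ a continuous curve with γ(t)·v = 0 for all t, and suppose there are a line D ⊂ ℝⁿ and R > 0 such that γ(ℝ) and D are at Hausdorff distance at most R from each other. Let A be the closure of γ(ℝ) + ℤⁿ in ℝⁿ. Then the Hausdorff dimension of A is at least 2. -/

import Mathlib

open scoped RealInnerProductSpace ENNReal

/-- The integer vector `z` viewed as a point of `ℝⁿ`. -/
noncomputable def intVec {n : ℕ} (z : Fin n → ℤ) : EuclideanSpace ℝ (Fin n) :=
  WithLp.toLp 2 (fun i => (z i : ℝ))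

namespace Stmt10Aux

variable {n : ℕ}

lemma intVec_zero : intVec (0 : Fin n → ℤ) = 0 := by ext i; simp [intVec]

noncomputable def lineGroup (d : EuclideanSpace ℝ (Fin n)) :
    AddSubgroup (EuclideanSpace ℝ (Fin n)) where
  carrier := {y | ∃ (t : ℝ) (z : Fin n → ℤ), y = intVec z + t • d}
  zero_mem' := ⟨0, 0, by simp [intVec_zero]⟩
  add_mem' := by
    rintro a b ⟨t, z, rfl⟩ ⟨t', z', rfl⟩
    refine ⟨t + t', z + z', ?_⟩
    have : intVec (z + z') = intVec z + intVec z' := by ext i; simp [intVec]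
    rw [this]; module
  neg_mem' := by
    rintro a ⟨t, z, rfl⟩
    refine ⟨-t, -z, ?_⟩
    have : intVec (-z) = -intVec z := by ext i; simp [intVec]
    rw [this]; module

noncomputable def Wsub (d : EuclideanSpace ℝ (Fin n)) :
    Submodule ℝ (EuclideanSpace ℝ (Fin n)) where
  carrier := {x | ∀ t : ℝ, t • x ∈ (lineGroup d).topologicalClosure}
  zero_mem' := fun t => by simpa using (lineGroup d).topologicalClosure.zero_mem
  add_mem' := by intro a b ha hb t; rw [smul_add]; exact add_mem (ha t) (hb t)
  smul_mem' := by intro c x hx t; rw [smul_smul]; exact hx (t * c)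

lemma mem_lineGroup_intVec (d : EuclideanSpace ℝ (Fin n)) (z : Fin n → ℤ) :
    intVec z ∈ lineGroup d := ⟨0, z, by simp⟩

lemma mem_lineGroup_smul (d : EuclideanSpace ℝ (Fin n)) (t : ℝ) :
    t • d ∈ lineGroup d := ⟨t, 0, by simp [intVec_zero]⟩

lemma smul_d_mem_Wsub (d : EuclideanSpace ℝ (Fin n)) (r : ℝ) : r • d ∈ Wsub d := by
  intro t
  rw [smul_smul]
  exact (lineGroup d).le_topologicalClosure (mem_lineGroup_smul d (t * r))

/-- The closed subgroup `H ∩ Wᗮ` is discrete at the origin. -/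
lemma gap (d : EuclideanSpace ℝ (Fin n)) :
    ∃ ε > 0, ∀ x ∈ (lineGroup d).topologicalClosure, x ∈ (Wsub d)ᗮ → ‖x‖ < ε → x = 0 := by
  by_contra hcon
  push_neg at hcon
  have hseq : ∀ j : ℕ, ∃ x : EuclideanSpace ℝ (Fin n),
      x ∈ (lineGroup d).topologicalClosure ∧ x ∈ (Wsub d)ᗮ ∧
      ‖x‖ < 1/(j+1 : ℝ) ∧ x ≠ 0 := by
    intro j
    obtain ⟨x, hx1, hx2, hx3, hx4⟩ := hcon (1/(j+1 : ℝ)) (by positivity)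
    exact ⟨x, hx1, hx2, hx3, hx4⟩
  choose lam hlamH hlamO hlamnorm hlamne using hseq
  set u : ℕ → EuclideanSpace ℝ (Fin n) := fun j => ‖lam j‖⁻¹ • lam j with hudef
  have hlampos : ∀ j, 0 < ‖lam j‖ := fun j => norm_pos_iff.mpr (hlamne j)
  have husphere : ∀ j, u j ∈ Metric.sphere (0 : EuclideanSpace ℝ (Fin n)) 1 := by
    intro j
    simp only [hudef, mem_sphere_iff_norm, sub_zero, norm_smul, norm_inv, norm_norm]
    field_simp
    exact div_self (ne_of_gt (hlampos j))
  obtain ⟨e, hesphere, ψ, hψmono, hψtend⟩ :=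
    (isCompact_sphere (0 : EuclideanSpace ℝ (Fin n)) 1).tendsto_subseq husphere
  have henorm : ‖e‖ = 1 := by simpa using hesphere
  -- e ∈ Wsub d
  have heW : e ∈ Wsub d := by
    intro t
    have hclosed : IsClosed ((lineGroup d).topologicalClosure :
        Set (EuclideanSpace ℝ (Fin n))) := (lineGroup d).isClosed_topologicalClosure
    set w : ℕ → EuclideanSpace ℝ (Fin n) :=
      fun j => (⌊t / ‖lam (ψ j)‖⌋ : ℤ) • lam (ψ j) with hwdef
    have hwH : ∀ j, w j ∈ (lineGroup d).topologicalClosure := fun j =>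
      zsmul_mem (hlamH (ψ j)) _
    have hwtend : Filter.Tendsto w Filter.atTop (nhds (t • e)) := by
      rw [tendsto_iff_norm_sub_tendsto_zero]
      have hbound : ∀ j, ‖w j - t • e‖ ≤ 1/(ψ j + 1 : ℝ) + |t| * ‖u (ψ j) - e‖ := by
        intro j
        set r := ‖lam (ψ j)‖
        have hrpos : 0 < r := hlampos (ψ j)
        have hw' : w j = ((⌊t / r⌋ : ℝ) * r) • u (ψ j) := by
          rw [hwdef, hudef]
          simp only [smul_smul]
          rw [← Int.cast_smul_eq_zsmul ℝ]
          congr 1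
          field_simp
          exact (mul_div_cancel_left₀ _ hrpos.ne').symm
        have hsplit : w j - t • e =
            ((⌊t / r⌋ : ℝ) * r - t) • u (ψ j) + t • (u (ψ j) - e) := by
          rw [hw', smul_sub, sub_smul]
          abel
        rw [hsplit]
        have h1 : ‖((⌊t / r⌋ : ℝ) * r - t) • u (ψ j)‖ ≤ 1/(ψ j + 1 : ℝ) := by
          rw [norm_smul]
          have hun : ‖u (ψ j)‖ = 1 := by simpa using husphere (ψ j)
          rw [hun, mul_one, Real.norm_eq_abs]
          have hfl : |(⌊t / r⌋ : ℝ) - t / r| ≤ 1 := by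
            have h1 := Int.floor_le (t / r)
            have h2 := Int.lt_floor_add_one (t / r)
            rw [abs_le]; constructor <;> linarith
          have : (⌊t / r⌋ : ℝ) * r - t = ((⌊t / r⌋ : ℝ) - t / r) * r := by
            field_simp
          rw [this, abs_mul, abs_of_pos hrpos]
          calc |(⌊t / r⌋ : ℝ) - t / r| * r ≤ 1 * r := by
                apply mul_le_mul_of_nonneg_right hfl hrpos.le
            _ = r := one_mul r
            _ ≤ 1/(ψ j + 1 : ℝ) := (hlamnorm (ψ j)).le
        have h2 : ‖t • (u (ψ j) - e)‖ = |t| * ‖u (ψ j) - e‖ := by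
          rw [norm_smul, Real.norm_eq_abs]
        calc ‖((⌊t / r⌋ : ℝ) * r - t) • u (ψ j) + t • (u (ψ j) - e)‖
            ≤ ‖((⌊t / r⌋ : ℝ) * r - t) • u (ψ j)‖ + ‖t • (u (ψ j) - e)‖ := norm_add_le _ _
          _ ≤ 1/(ψ j + 1 : ℝ) + |t| * ‖u (ψ j) - e‖ := by rw [h2]; linarith
      have htend0 : Filter.Tendsto (fun j => 1/(ψ j + 1 : ℝ) + |t| * ‖u (ψ j) - e‖)
          Filter.atTop (nhds 0) := by
        have ht1 : Filter.Tendsto (fun j => 1/(ψ j + 1 : ℝ)) Filter.atTop (nhds 0) := by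
          apply squeeze_zero (fun j => by positivity) (fun j => ?_)
            tendsto_one_div_add_atTop_nhds_zero_nat
          have : (j : ℝ) + 1 ≤ (ψ j : ℝ) + 1 := by
            have := hψmono.id_le j
            have : (j:ℝ) ≤ (ψ j : ℝ) := by exact_mod_cast hψmono.id_le j
            linarith
          apply div_le_div_of_nonneg_left one_pos.le (by positivity) this
        have ht2 : Filter.Tendsto (fun j => |t| * ‖u (ψ j) - e‖) Filter.atTop (nhds 0) := by
          have : Filter.Tendsto (fun j => ‖u (ψ j) - e‖) Filter.atTop (nhds 0) := by
            have := (hψtend.sub_const e).norm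
            simpa using this
          simpa using this.const_mul |t|
        simpa using ht1.add ht2
      exact squeeze_zero (fun j => norm_nonneg _) hbound htend0
    exact hclosed.mem_of_tendsto hwtend (Filter.Eventually.of_forall hwH)
  -- e ∈ Wᗮ
  have heO : e ∈ (Wsub d)ᗮ := by
    have hOclosed : IsClosed ((Wsub d)ᗮ : Set (EuclideanSpace ℝ (Fin n))) :=
      Submodule.isClosed_orthogonal (Wsub d)
    apply hOclosed.mem_of_tendsto hψtend
    apply Filter.Eventually.of_forall
    intro j
    exact Submodule.smul_mem _ _ (hlamO (ψ j))
  have : e = 0 := by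
    have h0 := (Submodule.mem_orthogonal _ e).mp heO e heW
    have h := real_inner_self_eq_norm_sq e
    rw [h0] at h
    have h2 : ‖e‖^2 = 0 := h.symm
    simpa [henorm] using h2
  rw [this] at henorm
  simp at henorm


/-- For every `δ > 0` there is a nonzero integer vector within `δ` of the line `ℝ d`. -/
lemma exists_int_near_line {d : EuclideanSpace ℝ (Fin n)} (hd : d ≠ 0) {δ : ℝ} (hδ : 0 < δ) :
    ∃ (z : Fin n → ℤ) (t : ℝ), z ≠ 0 ∧ ‖intVec z - t • d‖ < δ := by
  have hdn : 0 < ‖d‖ := norm_pos_iff.mpr hd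
  set δ' : ℝ := min δ (‖d‖ / 2) with hδ'def
  have hδ' : 0 < δ' := lt_min hδ (by positivity)
  obtain ⟨K, hK⟩ := exists_nat_gt ((Real.sqrt n + 1) / δ')
  have hKpos : 0 < (K : ℝ) := lt_trans (by positivity) hK
  have hsqrt : Real.sqrt n / K < δ' := by
    rw [div_lt_iff₀ hKpos]
    have : Real.sqrt n + 1 < δ' * K := by
      rw [← div_lt_iff₀' hδ']; exact hK
    nlinarith [Real.sqrt_nonneg (n : ℝ)]
  have hnn : ∀ (m : ℕ) (i : Fin n), (0:ℤ) ≤ ⌊Int.fract ((m : ℝ) * d i) * K⌋ :=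
    fun m i => Int.floor_nonneg.2 (mul_nonneg (Int.fract_nonneg _) hKpos.le)
  set φ : ℕ → (Fin n → Fin K) := fun m i =>
    ⟨(⌊Int.fract ((m : ℝ) * d i) * K⌋).toNat, by
      have h0 := hnn m i
      have h1 : ⌊Int.fract ((m : ℝ) * d i) * K⌋ < (K : ℤ) := by
        apply Int.floor_lt.2
        push_cast
        calc Int.fract ((m : ℝ) * d i) * K < 1 * K :=
              mul_lt_mul_of_pos_right (Int.fract_lt_one _) hKpos
          _ = K := one_mul _
      omega⟩ with hφdef
  obtain ⟨a, b, hab, hfab⟩ := Finite.exists_ne_map_eq_of_infinite φ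
  wlog hlt : a < b generalizing a b
  · exact this b a hab.symm hfab.symm (by omega)
  set z : Fin n → ℤ := fun i => ⌊(b : ℝ) * d i⌋ - ⌊(a : ℝ) * d i⌋ with hzdef
  set t : ℝ := (b : ℝ) - (a : ℝ) with htdef
  have ht1 : 1 ≤ t := by
    rw [htdef]
    have : (a : ℝ) + 1 ≤ (b : ℝ) := by exact_mod_cast hlt
    linarith
  have hcoord : ∀ i : Fin n, |(intVec z - t • d) i| ≤ (K : ℝ)⁻¹ := by
    intro i
    have happ : (intVec z - t • d) i = (z i : ℝ) - t * d i := by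
      simp [intVec, PiLp.sub_apply, PiLp.smul_apply, smul_eq_mul]
    have heq : ⌊Int.fract ((a : ℝ) * d i) * K⌋ = ⌊Int.fract ((b : ℝ) * d i) * K⌋ := by
      have h := congrFun hfab i
      have ha' : ((φ a i : ℕ) : ℤ) = ⌊Int.fract ((a : ℝ) * d i) * K⌋ := by
        simp [hφdef, Int.toNat_of_nonneg (hnn a i)]
      have hb' : ((φ b i : ℕ) : ℤ) = ⌊Int.fract ((b : ℝ) * d i) * K⌋ := by
        simp [hφdef, Int.toNat_of_nonneg (hnn b i)]
      rw [← ha', ← hb']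
      exact_mod_cast congrArg (fun x : Fin K => ((x : ℕ) : ℤ)) h
    set x := Int.fract ((a : ℝ) * d i) with hxdef
    set y := Int.fract ((b : ℝ) * d i) with hydef
    have hx1 : (⌊x * K⌋ : ℝ) ≤ x * K := Int.floor_le _
    have hx2 : x * K < ⌊x * K⌋ + 1 := Int.lt_floor_add_one _
    have hy1 : (⌊y * K⌋ : ℝ) ≤ y * K := Int.floor_le _
    have hy2 : y * K < ⌊y * K⌋ + 1 := Int.lt_floor_add_one _
    have heqR : ((⌊x * K⌋ : ℤ) : ℝ) = ((⌊y * K⌋ : ℤ) : ℝ) := by exact_mod_cast heq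
    have hKinv : (K : ℝ)⁻¹ * K = 1 := inv_mul_cancel₀ (ne_of_gt hKpos)
    have hxy : |y - x| ≤ (K : ℝ)⁻¹ := by
      rw [abs_le]
      constructor <;> nlinarith
    have hval : (z i : ℝ) - t * d i = -(y - x) := by
      rw [hzdef, htdef, hydef, hxdef]
      simp only [Int.fract]
      push_cast
      ring
    rw [happ, hval, abs_neg]
    exact hxy
  have hnorm : ‖intVec z - t • d‖ ≤ Real.sqrt n * (K : ℝ)⁻¹ := by
    rw [EuclideanSpace.norm_eq]
    have hsum : ∑ i : Fin n, ‖(intVec z - t • d) i‖^2 ≤ (n : ℝ) * ((K : ℝ)⁻¹)^2 := by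
      calc ∑ i : Fin n, ‖(intVec z - t • d) i‖^2 ≤ ∑ _i : Fin n, ((K : ℝ)⁻¹)^2 := by
            apply Finset.sum_le_sum
            intro i _
            rw [Real.norm_eq_abs]
            have h1 := hcoord i
            have h2 := abs_nonneg ((intVec z - t • d) i)
            nlinarith
        _ = (n : ℝ) * ((K : ℝ)⁻¹)^2 := by
            simp [Finset.sum_const, Finset.card_univ]
    calc Real.sqrt (∑ i : Fin n, ‖(intVec z - t • d) i‖^2)
        ≤ Real.sqrt ((n : ℝ) * ((K : ℝ)⁻¹)^2) := Real.sqrt_le_sqrt hsum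
      _ = Real.sqrt n * (K : ℝ)⁻¹ := by
          rw [Real.sqrt_mul (by positivity), Real.sqrt_sq (by positivity)]
  have hlt' : ‖intVec z - t • d‖ < δ' := by
    apply lt_of_le_of_lt hnorm
    calc Real.sqrt n * (K : ℝ)⁻¹ = Real.sqrt n / K := by ring
      _ < δ' := hsqrt
  refine ⟨z, t, ?_, lt_of_lt_of_le hlt' (min_le_left _ _)⟩
  intro hz0
  have hiz : intVec z = 0 := by rw [hz0]; ext i; simp [intVec]
  rw [hiz, zero_sub, norm_neg, norm_smul] at hlt'
  have h1 : ‖d‖ ≤ |t| * ‖d‖ := by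
    have : 1 ≤ |t| := le_trans ht1 (le_abs_self t)
    nlinarith
  have h2 : δ' ≤ ‖d‖ / 2 := min_le_right _ _
  simp only [Real.norm_eq_abs] at hlt'
  linarith

/-- If `v` is totally irrational then some direction `w` along which `H` contains
a full line is not orthogonal to `v`. -/
lemma exists_w {v d : EuclideanSpace ℝ (Fin n)}
    (hv : ∀ z : Fin n → ℤ, z ≠ 0 → ⟪v, intVec z⟫ ≠ 0) (hd : d ≠ 0) :
    ∃ w : EuclideanSpace ℝ (Fin n), w ∈ Wsub d ∧ ⟪v, w⟫ ≠ 0 := by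
  by_contra hcon
  push_neg at hcon
  obtain ⟨ε, hε, hgap⟩ := gap d
  obtain ⟨z, t, hz, hnear⟩ := exists_int_near_line hd hε
  set x : EuclideanSpace ℝ (Fin n) := intVec z with hxdef
  set P : EuclideanSpace ℝ (Fin n) := (Submodule.orthogonalProjection (Wsub d) x : EuclideanSpace ℝ (Fin n))
    with hPdef
  have hPW : P ∈ Wsub d := (Submodule.orthogonalProjection (Wsub d) x).2
  set uu : EuclideanSpace ℝ (Fin n) := x - P with huudef
  have huuO : uu ∈ (Wsub d)ᗮ := Submodule.sub_starProjection_mem_orthogonal x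
  have hxH : x ∈ (lineGroup d).topologicalClosure :=
    (lineGroup d).le_topologicalClosure (mem_lineGroup_intVec d z)
  have hPH : P ∈ (lineGroup d).topologicalClosure := by simpa using hPW 1
  have huuH : uu ∈ (lineGroup d).topologicalClosure := sub_mem hxH hPH
  -- minimality: ‖uu‖ ≤ ‖x - t • d‖
  have hmin : ‖uu‖ ≤ ‖x - t • d‖ := by
    have hb : P - t • d ∈ Wsub d := sub_mem hPW (smul_d_mem_Wsub d t)
    have hsplit : x - t • d = uu + (P - t • d) := by rw [huudef]; abel
    have hinner : ⟪uu, P - t • d⟫ = 0 := by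
      exact (Submodule.mem_orthogonal' _ _).mp huuO _ hb
    have hsq : ‖x - t • d‖^2 = ‖uu‖^2 + ‖P - t • d‖^2 := by
      have hinner' : ⟪P - t • d, uu⟫ = 0 := by rw [real_inner_comm]; exact hinner
      rw [hsplit, ← real_inner_self_eq_norm_sq, inner_add_add_self, hinner, hinner',
        real_inner_self_eq_norm_sq, real_inner_self_eq_norm_sq]
      ring
    nlinarith [norm_nonneg uu, norm_nonneg (x - t • d), norm_nonneg (P - t • d)]
  have huu0 : uu = 0 := hgap uu huuH huuO (lt_of_le_of_lt hmin hnear)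
  have hxW : x ∈ Wsub d := by
    have : x = P := by rw [← sub_eq_zero]; exact huu0
    rw [this]; exact hPW
  exact hv z hz (hcon x hxW)


lemma pyth {d y : EuclideanSpace ℝ (Fin n)} (h : ⟪d, y⟫ = 0) (r : ℝ) :
    ‖y‖ ≤ ‖y + r • d‖ := by
  have h1 : ⟪y, r • d⟫ = 0 := by
    rw [real_inner_smul_right, real_inner_comm, h, mul_zero]
  have h2 : ⟪r • d, y⟫ = 0 := by rw [real_inner_comm]; exact h1
  have hsq : ‖y + r • d‖^2 = ‖y‖^2 + ‖r • d‖^2 := by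
    rw [← real_inner_self_eq_norm_sq, inner_add_add_self, h1, h2,
      real_inner_self_eq_norm_sq, real_inner_self_eq_norm_sq]
    ring
  nlinarith [norm_nonneg y, norm_nonneg (y + r • d), norm_nonneg (r • d)]

/-- The key surjectivity: the pair `(⟪v,·⟫, ⟪d,·⟫)` maps the closed orbit set onto `ℝ²`. -/
lemma key {v : EuclideanSpace ℝ (Fin n)}
    (hv : ∀ z : Fin n → ℤ, z ≠ 0 → ⟪v, intVec z⟫ ≠ 0)
    {γ : ℝ → EuclideanSpace ℝ (Fin n)} (hγ : Continuous γ)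
    (hperp : ∀ t : ℝ, ⟪γ t, v⟫ = 0)
    {p d : EuclideanSpace ℝ (Fin n)} (hd : d ≠ 0)
    {D : Set (EuclideanSpace ℝ (Fin n))} (hD : D = {x | ∃ t : ℝ, x = p + t • d})
    {R : ℝ} (hR : 0 < R)
    (h1 : ∀ t : ℝ, Metric.infDist (γ t) D ≤ R)
    (h2 : ∀ x ∈ D, ∃ t : ℝ, dist x (γ t) ≤ R) (c s : ℝ) :
    ∃ x ∈ closure {y : EuclideanSpace ℝ (Fin n) |
      ∃ (t : ℝ) (z : Fin n → ℤ), y = γ t + intVec z}, ⟪v, x⟫ = c ∧ ⟪d, x⟫ = s := by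
  have hdn : 0 < ‖d‖ := norm_pos_iff.mpr hd
  have hdd : ⟪d, d⟫ = ‖d‖^2 := real_inner_self_eq_norm_sq d
  -- v is orthogonal to d
  have hvd : ⟪v, d⟫ = 0 := by
    by_contra hne
    have hbound : ∀ T : ℝ, |⟪v, p⟫ + T * ⟪v, d⟫| ≤ ‖v‖ * R := by
      intro T
      have hxD : p + T • d ∈ D := by rw [hD]; exact ⟨T, rfl⟩
      obtain ⟨σ, hσ⟩ := h2 _ hxD
      have hγv : ⟪v, γ σ⟫ = 0 := by rw [real_inner_comm]; exact hperp σ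
      have : ⟪v, p⟫ + T * ⟪v, d⟫ = ⟪v, (p + T • d) - γ σ⟫ := by
        rw [inner_sub_right, inner_add_right, real_inner_smul_right, hγv]; ring
      rw [this]
      calc |⟪v, (p + T • d) - γ σ⟫| ≤ ‖v‖ * ‖(p + T • d) - γ σ‖ :=
            abs_real_inner_le_norm _ _
        _ ≤ ‖v‖ * R := by
            apply mul_le_mul_of_nonneg_left _ (norm_nonneg v)
            rw [← dist_eq_norm]
            exact hσ
    set T := (‖v‖ * R + |⟪v, p⟫| + 1) / ⟪v, d⟫ with hT
    have hTc : T * ⟪v, d⟫ = ‖v‖ * R + |⟪v, p⟫| + 1 := by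
      rw [hT]; exact div_mul_cancel₀ _ hne
    have hb := hbound T
    rw [hTc] at hb
    have h3 := abs_le.mp hb
    have h4 := neg_abs_le ⟪v, p⟫
    linarith [h3.2]
  -- surjectivity of σ ↦ ⟪d, γ σ⟫
  have hsurj : ∀ y : ℝ, ∃ σ : ℝ, ⟪d, γ σ⟫ = y := by
    have hcont : Continuous fun σ => ⟪d, γ σ⟫ := Continuous.inner continuous_const hγ
    have hup : ∀ y : ℝ, ∃ σ, y ≤ ⟪d, γ σ⟫ := by
      intro y
      set T := (y + ‖d‖ * R + |⟪d, p⟫|) / ‖d‖^2 with hT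
      have hxD : p + T • d ∈ D := by rw [hD]; exact ⟨T, rfl⟩
      obtain ⟨σ, hσ⟩ := h2 _ hxD
      have hTd : T * ‖d‖^2 = y + ‖d‖ * R + |⟪d, p⟫| := by
        rw [hT]; exact div_mul_cancel₀ _ (by positivity : (0:ℝ) < ‖d‖^2).ne'
      have hest : |⟪d, (p + T • d) - γ σ⟫| ≤ ‖d‖ * R := by
        calc |⟪d, (p + T • d) - γ σ⟫| ≤ ‖d‖ * ‖(p + T • d) - γ σ‖ :=
              abs_real_inner_le_norm _ _
          _ ≤ ‖d‖ * R := by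
              apply mul_le_mul_of_nonneg_left _ (norm_nonneg d)
              rw [← dist_eq_norm]
              exact hσ
      have hexp : ⟪d, (p + T • d) - γ σ⟫ = ⟪d, p⟫ + T * ‖d‖^2 - ⟪d, γ σ⟫ := by
        rw [inner_sub_right, inner_add_right, real_inner_smul_right, hdd]
      refine ⟨σ, ?_⟩
      have h5 := abs_le.mp hest
      rw [hexp, hTd] at h5
      have h6 := neg_abs_le ⟪d, p⟫
      linarith [h5.2]
    have hdown : ∀ y : ℝ, ∃ σ, ⟪d, γ σ⟫ ≤ y := by
      intro y
      set T := (y - ‖d‖ * R - |⟪d, p⟫|) / ‖d‖^2 with hT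
      have hxD : p + T • d ∈ D := by rw [hD]; exact ⟨T, rfl⟩
      obtain ⟨σ, hσ⟩ := h2 _ hxD
      have hTd : T * ‖d‖^2 = y - ‖d‖ * R - |⟪d, p⟫| := by
        rw [hT]; exact div_mul_cancel₀ _ (by positivity : (0:ℝ) < ‖d‖^2).ne'
      have hest : |⟪d, (p + T • d) - γ σ⟫| ≤ ‖d‖ * R := by
        calc |⟪d, (p + T • d) - γ σ⟫| ≤ ‖d‖ * ‖(p + T • d) - γ σ‖ :=
              abs_real_inner_le_norm _ _
          _ ≤ ‖d‖ * R := by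
              apply mul_le_mul_of_nonneg_left _ (norm_nonneg d)
              rw [← dist_eq_norm]
              exact hσ
      have hexp : ⟪d, (p + T • d) - γ σ⟫ = ⟪d, p⟫ + T * ‖d‖^2 - ⟪d, γ σ⟫ := by
        rw [inner_sub_right, inner_add_right, real_inner_smul_right, hdd]
      refine ⟨σ, ?_⟩
      have h5 := abs_le.mp hest
      rw [hexp, hTd] at h5
      have h6 := le_abs_self ⟪d, p⟫
      linarith [h5.1]
    intro y
    obtain ⟨σ₁, hσ₁⟩ := hdown y
    obtain ⟨σ₂, hσ₂⟩ := hup y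
    have hmem : y ∈ Set.uIcc (⟪d, γ σ₁⟫) (⟪d, γ σ₂⟫) :=
      Set.mem_uIcc.mpr (Or.inl ⟨hσ₁, hσ₂⟩)
    obtain ⟨σ, _, hσ⟩ := intermediate_value_uIcc (Continuous.continuousOn hcont) hmem
    exact ⟨σ, hσ⟩
  -- the direction w and the point u
  obtain ⟨w, hwW, hvw⟩ := exists_w hv hd
  set u := (c / ⟪v, w⟫) • w with hu
  have huH : u ∈ (lineGroup d).topologicalClosure := hwW _
  have hvu : ⟪v, u⟫ = c := by
    rw [hu, real_inner_smul_right, div_mul_cancel₀ _ hvw]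
  -- approximating sequence from the line group
  have huc : u ∈ closure ((lineGroup d : Set (EuclideanSpace ℝ (Fin n)))) := huH
  have happrox : ∀ j : ℕ, ∃ y ∈ (lineGroup d : Set (EuclideanSpace ℝ (Fin n))),
      dist u y < 1/(j+1 : ℝ) :=
    fun j => Metric.mem_closure_iff.mp huc _ (by positivity)
  choose yy hyS hydist using happrox
  have hyty : ∀ j : ℕ, ∃ (t : ℝ) (z : Fin n → ℤ), yy j = intVec z + t • d := fun j => hyS j
  choose tt zz hyz using hyty
  -- the curve points
  have hσc : ∀ j : ℕ, ∃ σ : ℝ, ⟪d, γ σ⟫ = s - ⟪d, intVec (zz j)⟫ :=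
    fun j => hsurj _
  choose σσ hσσ using hσc
  set xx : ℕ → EuclideanSpace ℝ (Fin n) := fun j => γ (σσ j) + intVec (zz j) with hxx
  have hxmem : ∀ j, xx j ∈ {y : EuclideanSpace ℝ (Fin n) |
      ∃ (t : ℝ) (z : Fin n → ℤ), y = γ t + intVec z} := fun j => ⟨σσ j, zz j, rfl⟩
  have hxd : ∀ j, ⟪d, xx j⟫ = s := by
    intro j
    rw [hxx]
    simp only [inner_add_right, hσσ j]
    ring
  have hiz : ∀ j, intVec (zz j) = yy j - tt j • d := by
    intro j; rw [hyz j]; abel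
  have hxv : ∀ j, ⟪v, xx j⟫ = ⟪v, yy j⟫ := by
    intro j
    rw [hxx]
    simp only [inner_add_right]
    rw [hiz j, inner_sub_right, real_inner_smul_right, hvd]
    have hγv : ⟪v, γ (σσ j)⟫ = 0 := by rw [real_inner_comm]; exact hperp (σσ j)
    rw [hγv]; ring
  -- boundedness
  set Q : EuclideanSpace ℝ (Fin n) → EuclideanSpace ℝ (Fin n) :=
    fun a => a - (⟪d, a⟫/‖d‖^2) • d with hQ
  have hQdO : ∀ a, ⟪d, Q a⟫ = 0 := by
    intro a
    rw [hQ]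
    simp only [inner_sub_right, real_inner_smul_right, hdd]
    rw [div_mul_cancel₀ _ (by positivity : (0:ℝ) < ‖d‖^2).ne']
    ring
  have hQrec : ∀ a, Q a + (⟪d, a⟫/‖d‖^2) • d = a := by
    intro a
    show a - (⟪d, a⟫/‖d‖^2) • d + (⟪d, a⟫/‖d‖^2) • d = a
    rw [sub_add_cancel]
  have hQle : ∀ a, ‖Q a‖ ≤ ‖a‖ := by
    intro a
    calc ‖Q a‖ ≤ ‖Q a + (⟪d, a⟫/‖d‖^2) • d‖ := pyth (hQdO a) _
      _ = ‖a‖ := by rw [hQrec a]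
  have hQadd : ∀ a b, Q (a + b) = Q a + Q b := by
    intro a b
    rw [hQ]
    simp only [inner_add_right]
    rw [add_div, add_smul]
    abel
  have hQsmuld : ∀ r : ℝ, Q (r • d) = 0 := by
    intro r
    rw [hQ]
    simp only [real_inner_smul_right, hdd]
    rw [mul_div_assoc, div_self (by positivity : (0:ℝ) < ‖d‖^2).ne', mul_one]
    abel
  have hDne : D.Nonempty := ⟨p, by rw [hD]; exact ⟨0, by simp⟩⟩
  have hQγ : ∀ σ : ℝ, ‖Q (γ σ)‖ ≤ R + 1 + ‖p‖ := by
    intro σ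
    have := lt_of_le_of_lt (h1 σ) (lt_add_one R)
    obtain ⟨w', hw'D, hw'⟩ := (Metric.infDist_lt_iff hDne).mp this
    rw [hD] at hw'D
    obtain ⟨τ, rfl⟩ := hw'D
    have hdec : γ σ = (γ σ - (p + τ • d)) + p + τ • d := by abel
    have hQdec : Q (γ σ) = Q (γ σ - (p + τ • d)) + Q p := by
      conv_lhs => rw [hdec]
      rw [hQadd, hQadd, hQsmuld]
      abel
    rw [hQdec]
    calc ‖Q (γ σ - (p + τ • d)) + Q p‖ ≤ ‖Q (γ σ - (p + τ • d))‖ + ‖Q p‖ := norm_add_le _ _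
      _ ≤ ‖γ σ - (p + τ • d)‖ + ‖p‖ := add_le_add (hQle _) (hQle _)
      _ ≤ (R + 1) + ‖p‖ := by
          gcongr
          rw [← dist_eq_norm]
          exact hw'.le
  have hynorm : ∀ j, ‖yy j‖ ≤ ‖u‖ + 1 := by
    intro j
    have h0 := hydist j
    have h1' : dist u (yy j) ≤ 1 := by
      apply le_trans h0.le
      rw [div_le_one (by positivity)]
      have : (0:ℝ) ≤ j := Nat.cast_nonneg j
      linarith
    have hdist : ‖yy j - u‖ ≤ 1 := by
      rw [← dist_eq_norm, dist_comm]
      exact h1'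
    calc ‖yy j‖ = ‖u + (yy j - u)‖ := by congr 1; abel
      _ ≤ ‖u‖ + ‖yy j - u‖ := norm_add_le _ _
      _ ≤ ‖u‖ + 1 := by linarith
  set K := R + 1 + ‖p‖ + (‖u‖ + 1) + |s|/‖d‖ with hK
  have hxbound : ∀ j, ‖xx j‖ ≤ K := by
    intro j
    have hQx : Q (xx j) = Q (γ (σσ j)) + Q (yy j) := by
      rw [hxx]
      simp only
      rw [hQadd, hiz j]
      have : yy j - tt j • d = yy j + (-(tt j)) • d := by
        rw [neg_smul]; abel
      rw [this, hQadd, hQsmuld]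
      abel
    have hrec := hQrec (xx j)
    have hxj : xx j = Q (xx j) + (s/‖d‖^2) • d := by
      rw [← hxd j]; exact (hQrec (xx j)).symm
    calc ‖xx j‖ = ‖Q (xx j) + (s/‖d‖^2) • d‖ := by rw [← hxj]
      _ ≤ ‖Q (xx j)‖ + ‖(s/‖d‖^2) • d‖ := norm_add_le _ _
      _ ≤ (‖Q (γ (σσ j))‖ + ‖Q (yy j)‖) + |s|/‖d‖ := by
          apply add_le_add
          · rw [hQx]; exact norm_add_le _ _
          · rw [norm_smul, Real.norm_eq_abs, abs_div, abs_of_pos (by positivity : (0:ℝ) < ‖d‖^2)]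
            rw [div_mul_eq_mul_div, pow_two]
            rw [mul_div_assoc]
            have : ‖d‖ / (‖d‖ * ‖d‖) = 1/‖d‖ := by field_simp
            rw [this]
            rw [mul_one_div]
      _ ≤ (R + 1 + ‖p‖ + (‖Q (yy j)‖)) + |s|/‖d‖ := by
          have := hQγ (σσ j); linarith
      _ ≤ K := by
          have h5 := le_trans (hQle (yy j)) (hynorm j)
          rw [hK]; linarith
  -- extract a convergent subsequence
  have hin : ∀ j, xx j ∈ Metric.closedBall (0 : EuclideanSpace ℝ (Fin n)) K := by
    intro j
    rw [Metric.mem_closedBall, dist_zero_right]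
    exact hxbound j
  obtain ⟨xl, _, φ, hφmono, hφtend⟩ :=
    (isCompact_closedBall (0 : EuclideanSpace ℝ (Fin n)) K).tendsto_subseq hin
  refine ⟨xl, ?_, ?_, ?_⟩
  · exact mem_closure_of_tendsto hφtend
      (Filter.Eventually.of_forall (fun j => hxmem (φ j)))
  · -- inner v xl = c
    have hyu : Filter.Tendsto yy Filter.atTop (nhds u) := by
      rw [tendsto_iff_dist_tendsto_zero]
      apply squeeze_zero (fun j => dist_nonneg) (fun j => ?_)
        tendsto_one_div_add_atTop_nhds_zero_nat
      rw [dist_comm]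
      exact (hydist j).le
    have ht1 : Filter.Tendsto (fun j => ⟪v, yy (φ j)⟫) Filter.atTop (nhds c) := by
      rw [← hvu]
      exact Filter.Tendsto.inner tendsto_const_nhds (hyu.comp hφmono.tendsto_atTop)
    have ht2 : Filter.Tendsto (fun j => ⟪v, xx (φ j)⟫) Filter.atTop (nhds ⟪v, xl⟫) :=
      Filter.Tendsto.inner tendsto_const_nhds hφtend
    have heq : (fun j => ⟪v, xx (φ j)⟫) = (fun j => ⟪v, yy (φ j)⟫) := by
      funext j; exact hxv (φ j)
    rw [heq] at ht2
    exact tendsto_nhds_unique ht2 ht1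
  · -- inner d xl = s
    have ht2 : Filter.Tendsto (fun j => ⟪d, xx (φ j)⟫) Filter.atTop (nhds ⟪d, xl⟫) :=
      Filter.Tendsto.inner tendsto_const_nhds hφtend
    have heq : (fun j => ⟪d, xx (φ j)⟫) = (fun _ => s) := by
      funext j; exact hxd (φ j)
    rw [heq] at ht2
    exact tendsto_nhds_unique ht2 tendsto_const_nhds

end Stmt10Aux

open Stmt10Aux

/-- Let `v ∈ ℝⁿ` be totally irrational, `γ` a continuous curve with `γ(t) · v = 0` for
all `t`, staying within Hausdorff distance `R` of a line `D`. Then the closure `A` of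
`γ(ℝ) + ℤⁿ` has Hausdorff dimension at least `2`. -/
theorem stmt10 {n : ℕ} (v : EuclideanSpace ℝ (Fin n))
    (hv : ∀ z : Fin n → ℤ, z ≠ 0 → ⟪v, intVec z⟫ ≠ 0)
    (γ : ℝ → EuclideanSpace ℝ (Fin n)) (hγ : Continuous γ)
    (hperp : ∀ t : ℝ, ⟪γ t, v⟫ = 0)
    (p d : EuclideanSpace ℝ (Fin n)) (hd : d ≠ 0)
    (D : Set (EuclideanSpace ℝ (Fin n))) (hD : D = {x | ∃ t : ℝ, x = p + t • d})
    (R : ℝ) (hR : 0 < R)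
    (h1 : ∀ t : ℝ, Metric.infDist (γ t) D ≤ R)
    (h2 : ∀ x ∈ D, ∃ t : ℝ, dist x (γ t) ≤ R) :
    2 ≤ dimH (closure {y : EuclideanSpace ℝ (Fin n) |
      ∃ (t : ℝ) (z : Fin n → ℤ), y = γ t + intVec z}) := by
  set A := closure {y : EuclideanSpace ℝ (Fin n) |
      ∃ (t : ℝ) (z : Fin n → ℤ), y = γ t + intVec z} with hA
  set F : EuclideanSpace ℝ (Fin n) → (Fin 2 → ℝ) :=
    fun x => ![⟪v, x⟫, ⟪d, x⟫] with hF
  have hLip : LipschitzWith (‖v‖₊ + ‖d‖₊) F := by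
    apply LipschitzWith.of_dist_le_mul
    intro x y
    rw [dist_pi_le_iff (by positivity)]
    intro i
    have hcoe : ((‖v‖₊ + ‖d‖₊ : NNReal) : ℝ) = ‖v‖ + ‖d‖ := by
      push_cast; rfl
    have hvb : |⟪v, x⟫ - ⟪v, y⟫| ≤ (‖v‖ + ‖d‖) * dist x y := by
      rw [← inner_sub_right, dist_eq_norm]
      calc |⟪v, x - y⟫| ≤ ‖v‖ * ‖x - y‖ := abs_real_inner_le_norm _ _
        _ ≤ (‖v‖ + ‖d‖) * ‖x - y‖ := by
            apply mul_le_mul_of_nonneg_right _ (norm_nonneg _)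
            linarith [norm_nonneg d]
    have hdb : |⟪d, x⟫ - ⟪d, y⟫| ≤ (‖v‖ + ‖d‖) * dist x y := by
      rw [← inner_sub_right, dist_eq_norm]
      calc |⟪d, x - y⟫| ≤ ‖d‖ * ‖x - y‖ := abs_real_inner_le_norm _ _
        _ ≤ (‖v‖ + ‖d‖) * ‖x - y‖ := by
            apply mul_le_mul_of_nonneg_right _ (norm_nonneg _)
            linarith [norm_nonneg v]
    fin_cases i
    · simpa [hF, Real.dist_eq, hcoe] using hvb
    · simpa [hF, Real.dist_eq, hcoe] using hdb
  have himg : F '' A = Set.univ := by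
    apply Set.eq_univ_of_forall
    intro r
    obtain ⟨x, hxA, hxv, hxd⟩ := key hv hγ hperp hd hD hR h1 h2 (r 0) (r 1)
    refine ⟨x, hxA, ?_⟩
    funext i
    fin_cases i
    · simpa [hF] using hxv
    · simpa [hF] using hxd
  calc (2 : ℝ≥0∞) = dimH (Set.univ : Set (Fin 2 → ℝ)) := by
        rw [Real.dimH_univ_pi_fin]; norm_num
    _ = dimH (F '' A) := by rw [himg]
    _ ≤ dimH A := hLip.dimH_image_le A
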